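/- Let Λ be a row-finite, locally convex k-graph. Fix v ∈ Λ^0, m ≠ n ∈ ℕ^k, and p ∈ ℕ^k such that p ∧ d(x₀) = 0 for some x₀ ∈ vΛ^{≤∞}. Then the following are equivalent: (i) for every z ∈ vΛ^{≤∞} and every l ∈ ℕ^k, (z;(p+m, p+m+l)) ≈ (z;(p+n, p+n+l)); (ii) Λ has local periodicity m, n at v. (Statement (i) expresses that the desourcification of Λ has local periodicity m, n at the vertex [x₀;p], whose image under the canonical projection π is v; thus this is the content of the Proposition that the desourcification has local periodicity m,n at a vertex w if and only if Λ has local periodicity m,n at π(w).) -/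

import Mathlib

open scoped ENat

/-- `q ≤ m` coordinatewise, where `q ∈ ℕ^k` and `m ∈ (ℕ ∪ {∞})^k`. -/
def leDeg (k : ℕ) (q : Fin k → ℕ) (m : Fin k → ℕ∞) : Prop :=
  ∀ i, (q i : ℕ∞) ≤ m i

/-- The coordinatewise minimum `m ∧ d` of `m ∈ ℕ^k` and `d ∈ (ℕ ∪ {∞})^k`,
viewed as an element of `ℕ^k`. -/
noncomputable def wedge {k : ℕ} (m : Fin k → ℕ) (dx : Fin k → ℕ∞) : Fin k → ℕ :=
  fun i => ((m i : ℕ∞) ⊓ dx i).toNat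

lemma wedge_coe {k : ℕ} (m : Fin k → ℕ) (dx : Fin k → ℕ∞) (i : Fin k) :
    ((wedge m dx i : ℕ)  : ℕ∞) = (m i : ℕ∞) ⊓ dx i := by
  have h : (m i : ℕ∞) ⊓ dx i ≠ ⊤ :=
    (inf_le_left.trans_lt (ENat.coe_lt_top (m i))).ne
  simpa [wedge] using ENat.coe_toNat h

lemma wedge_leDeg {k : ℕ} (m : Fin k → ℕ) (dx : Fin k → ℕ∞) :
    leDeg k (wedge m dx) dx := by
  intro i
  rw [wedge_coe]
  exact inf_le_right

/-- The data of a countable-free small category with a degree map: the underlying data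
of a `k`-graph. -/
structure KGraphData (k : ℕ) where
  Obj : Type
  Mor : Type
  r : Mor → Obj
  s : Mor → Obj
  idm : Obj → Mor
  comp : Mor → Mor → Mor
  d : Mor → Fin k → ℕ

/-- The axioms making `Λ` a `k`-graph: a small category together with a degree functor
`d : Λ → ℕ^k` satisfying the factorisation property. (Composition `comp f g` is only
constrained when `s f = r g`.) -/
structure IsKGraph {k : ℕ} (Λ : KGraphData k) : Prop where
  r_id : ∀ v, Λ.r (Λ.idm v) = v
  s_id : ∀ v, Λ.s (Λ.idm v) = v
  id_comp : ∀ f, Λ.comp (Λ.idm (Λ.r f)) f = f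
  comp_id : ∀ f, Λ.comp f (Λ.idm (Λ.s f)) = f
  r_comp : ∀ f g, Λ.s f = Λ.r g → Λ.r (Λ.comp f g) = Λ.r f
  s_comp : ∀ f g, Λ.s f = Λ.r g → Λ.s (Λ.comp f g) = Λ.s g
  assoc : ∀ f g h, Λ.s f = Λ.r g → Λ.s g = Λ.r h →
    Λ.comp (Λ.comp f g) h = Λ.comp f (Λ.comp g h)
  d_id : ∀ v, Λ.d (Λ.idm v) = 0
  d_comp : ∀ f g, Λ.s f = Λ.r g → Λ.d (Λ.comp f g) = Λ.d f + Λ.d g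
  factor : ∀ (f : Λ.Mor) (m n : Fin k → ℕ), Λ.d f = m + n →
    ∃! p : Λ.Mor × Λ.Mor, Λ.s p.1 = Λ.r p.2 ∧ Λ.d p.1 = m ∧ Λ.d p.2 = n ∧
      Λ.comp p.1 p.2 = f

/-- `Λ` is row-finite: `vΛ^n` is finite for every vertex `v` and degree `n`. -/
def RowFinite {k : ℕ} (Λ : KGraphData k) : Prop :=
  ∀ (v : Λ.Obj) (n : Fin k → ℕ), {f : Λ.Mor | Λ.r f = v ∧ Λ.d f = n}.Finite

/-- `Λ` is locally convex. -/
def LocallyConvex {k : ℕ} (Λ : KGraphData k) : Prop :=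
  ∀ (i j : Fin k), i ≠ j → ∀ lam mu : Λ.Mor,
    Λ.d lam = Pi.single i 1 → Λ.d mu = Pi.single j 1 → Λ.r lam = Λ.r mu →
    (∃ f, Λ.r f = Λ.s lam ∧ Λ.d f = Pi.single j 1) ∧
    (∃ g, Λ.r g = Λ.s mu ∧ Λ.d g = Pi.single i 1)

/-- A boundary path of `Λ`: a degree-preserving functor `x : Ω_{k,m} → Λ`
(encoded by its vertex map `vert` and segment map `seg`, constrained on
pairs `p ≤ q ≤ m = deg`) such that whenever `p ≤ m` and `p i = m i`,
`x(p)Λ^{e_i} = ∅`. -/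
structure BPath (k : ℕ) (Λ : KGraphData k) where
  deg : Fin k → ℕ∞
  vert : (Fin k → ℕ) → Λ.Obj
  seg : (Fin k → ℕ) → (Fin k → ℕ) → Λ.Mor
  seg_r : ∀ p q, p ≤ q → leDeg k q deg → Λ.r (seg p q) = vert p
  seg_s : ∀ p q, p ≤ q → leDeg k q deg → Λ.s (seg p q) = vert q
  seg_deg : ∀ p q, p ≤ q → leDeg k q deg → Λ.d (seg p q) = q - p
  seg_id : ∀ p, leDeg k p deg → seg p p = Λ.idm (vert p)
  seg_comp : ∀ p q t, p ≤ q → q ≤ t → leDeg k t deg →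
    Λ.comp (seg p q) (seg q t) = seg p t
  boundary : ∀ (p : Fin k → ℕ) (i : Fin k), leDeg k p deg → (p i : ℕ∞) = deg i →
    ∀ e : Λ.Mor, Λ.r e = vert p → Λ.d e ≠ Pi.single i 1

/-- Equality of boundary paths as functors: same degree and the same segments on
the common (valid) domain. -/
def BPath.eqv {k : ℕ} {Λ : KGraphData k} (x y : BPath k Λ) : Prop :=
  x.deg = y.deg ∧ ∀ p q, p ≤ q → leDeg k q x.deg → x.seg p q = y.seg p q

lemma leDeg_add {k : ℕ} {n q : Fin k → ℕ} {D : Fin k → ℕ∞}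
    (hn : leDeg k n D) (hq : leDeg k q (fun i => D i - (n i : ℕ∞))) :
    leDeg k (q + n) D := by
  intro i
  have hqi := hq i
  have hni := hn i
  by_cases hD : D i = ⊤
  · rw [hD]; exact le_top
  · lift D i to ℕ using hD with a ha
    rw [show ((a : ℕ∞) - (n i : ℕ∞)) = ((a - n i : ℕ) : ℕ∞) by
      exact_mod_cast (ENat.coe_sub a (n i)).symm] at hqi
    have h1 : q i ≤ a - n i := by exact_mod_cast hqi
    have h2 : n i ≤ a := by exact_mod_cast hni
    have h3 : q i + n i ≤ a := by omega
    show ((q i + n i : ℕ) : ℕ∞) ≤ (a : ℕ∞)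
    exact_mod_cast h3

/-- The shift `σ^n(x)` of a boundary path `x` by `n ≤ d(x)`. -/
def BPath.shift {k : ℕ} {Λ : KGraphData k} (x : BPath k Λ) (n : Fin k → ℕ)
    (h : leDeg k n x.deg) : BPath k Λ where
  deg := fun i => x.deg i - (n i : ℕ∞)
  vert := fun p => x.vert (p + n)
  seg := fun p q => x.seg (p + n) (q + n)
  seg_r := fun p q hpq hq =>
    x.seg_r (p + n) (q + n) (add_le_add_left hpq n) (leDeg_add h hq)
  seg_s := fun p q hpq hq =>
    x.seg_s (p + n) (q + n) (add_le_add_left hpq n) (leDeg_add h hq)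
  seg_deg := by
    intro p q hpq hq
    rw [x.seg_deg (p + n) (q + n) (add_le_add_left hpq n) (leDeg_add h hq)]
    funext i
    simp only [Pi.sub_apply, Pi.add_apply]
    omega
  seg_id := by
    intro p hp
    show x.seg (p + n) (p + n) = _
    rw [x.seg_id (p + n) (leDeg_add h hp)]
  seg_comp := fun p q t hpq hqt ht =>
    x.seg_comp (p + n) (q + n) (t + n) (add_le_add_left hpq n)
      (add_le_add_left hqt n) (leDeg_add h ht)
  boundary := by
    intro p i hp hpi e he
    refine x.boundary (p + n) i (leDeg_add h hp) ?_ e he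
    have hni := h i
    have hpi' : (p i : ℕ∞) = x.deg i - (n i : ℕ∞) := hpi
    clear hpi
    by_cases hD : x.deg i = ⊤
    · rw [hD] at hpi'
      simp at hpi'
    · lift x.deg i to ℕ using hD with a ha
      rw [show ((a : ℕ∞) - (n i : ℕ∞)) = ((a - n i : ℕ) : ℕ∞) by
        exact_mod_cast (ENat.coe_sub a (n i)).symm] at hpi'
      have h1 : p i = a - n i := by exact_mod_cast hpi'
      have h2 : n i ≤ a := by exact_mod_cast hni
      have h3 : p i + n i = a := by omega
      show ((p i + n i : ℕ) : ℕ∞) = (a : ℕ∞)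
      exact_mod_cast h3

/-- The relation `∼` on `V_Λ = Λ^{≤∞} × ℕ^k`. -/
def VRel {k : ℕ} {Λ : KGraphData k} (a b : BPath k Λ × (Fin k → ℕ)) : Prop :=
  a.1.vert (wedge a.2 a.1.deg) = b.1.vert (wedge b.2 b.1.deg) ∧
  a.2 - wedge a.2 a.1.deg = b.2 - wedge b.2 b.1.deg

/-- The relation `≈` on `P_Λ = {(x;(m,n)) : x ∈ Λ^{≤∞}, m ≤ n}`
(as a relation on all triples). -/
def PRel {k : ℕ} {Λ : KGraphData k}
    (a b : BPath k Λ × (Fin k → ℕ) × (Fin k → ℕ)) : Prop :=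
  a.1.seg (wedge a.2.1 a.1.deg) (wedge a.2.2 a.1.deg) =
    b.1.seg (wedge b.2.1 b.1.deg) (wedge b.2.2 b.1.deg) ∧
  a.2.1 - wedge a.2.1 a.1.deg = b.2.1 - wedge b.2.1 b.1.deg ∧
  a.2.2 - a.2.1 = b.2.2 - b.2.1

/-- `z` is the concatenation `λ x` of the morphism `lam` with the boundary path `x`:
`z` has degree `d(lam) + d(x)`, `z(0, d lam) = lam`, and
`z(d lam, d lam + p) = x(0, p)` for all `p ≤ d(x)`. -/
def IsConcat {k : ℕ} (Λ : KGraphData k) (lam : Λ.Mor) (x z : BPath k Λ) : Prop :=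
  z.deg = (fun i => (Λ.d lam i : ℕ∞) + x.deg i) ∧
  z.seg 0 (Λ.d lam) = lam ∧
  ∀ p, leDeg k p x.deg → z.seg (Λ.d lam) (Λ.d lam + p) = x.seg 0 p

/-- `Λ` has local periodicity `m, n` at the vertex `v`: for every boundary path
`x ∈ vΛ^{≤∞}`, `m − m∧d(x) = n − n∧d(x)` and `σ^{m∧d(x)}(x) = σ^{n∧d(x)}(x)`. -/
def LocalPeriodicity {k : ℕ} (Λ : KGraphData k) (m n : Fin k → ℕ) (v : Λ.Obj) : Prop :=
  ∀ x : BPath k Λ, x.vert 0 = v →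
    (m - wedge m x.deg = n - wedge n x.deg) ∧
    BPath.eqv (x.shift (wedge m x.deg) (wedge_leDeg m x.deg))
      (x.shift (wedge n x.deg) (wedge_leDeg n x.deg))

lemma wedge_le {k : ℕ} (m : Fin k → ℕ) (D : Fin k → ℕ∞) (i : Fin k) :
    wedge m D i ≤ m i := by
  have h : ((wedge m D i : ℕ) : ℕ∞) ≤ (m i : ℕ∞) := by
    rw [wedge_coe]; exact inf_le_left
  exact_mod_cast h

lemma wedge_eq_of_leDeg {k : ℕ} {q : Fin k → ℕ} {D : Fin k → ℕ∞}
    (h : leDeg k q D) : wedge q D = q := by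
  funext i
  simp [wedge, inf_eq_left.mpr (h i)]

lemma coe_inf_coe (a b : ℕ) : ((a : ℕ∞) ⊓ (b : ℕ∞)) = ((min a b : ℕ) : ℕ∞) := by
  rcases le_total a b with h | h
  · rw [min_eq_left h, inf_eq_left.mpr (by exact_mod_cast h)]
  · rw [min_eq_right h, inf_eq_right.mpr (by exact_mod_cast h)]

lemma wedge_add {k : ℕ} (m l : Fin k → ℕ) (D : Fin k → ℕ∞) :
    wedge (m + l) D = wedge m D + wedge l (fun i => D i - (wedge m D i : ℕ∞)) := by
  funext i
  simp only [wedge, Pi.add_apply]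
  by_cases hD : D i = ⊤
  · simp [hD, ENat.top_sub_coe, ← Nat.cast_add]
  · lift D i to ℕ using hD with d
    rw [coe_inf_coe (m i) d, coe_inf_coe (m i + l i) d, ENat.toNat_coe, ENat.toNat_coe,
      ← ENat.coe_sub, coe_inf_coe, ENat.toNat_coe]
    omega

lemma enat_eq_of_inf {c1 c2 : ℕ∞} (h : ∀ N : ℕ, (N : ℕ∞) ⊓ c1 = (N : ℕ∞) ⊓ c2) :
    c1 = c2 := by
  induction c1 using ENat.recTopCoe with
  | top =>
    induction c2 using ENat.recTopCoe with
    | top => rfl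
    | coe b =>
      have h1 := h (b + 1)
      rw [inf_top_eq, inf_eq_right.mpr (by exact_mod_cast Nat.le_succ b)] at h1
      have : b + 1 = b := by exact_mod_cast h1
      omega
  | coe a =>
    induction c2 using ENat.recTopCoe with
    | top =>
      have h1 := h (a + 1)
      rw [inf_top_eq, inf_eq_right.mpr (by exact_mod_cast Nat.le_succ a)] at h1
      have : a + 1 = a := by exact_mod_cast h1.symm
      omega
    | coe b =>
      have h1 := h (max a b)
      rw [inf_eq_right.mpr (by exact_mod_cast le_max_left a b),
        inf_eq_right.mpr (by exact_mod_cast le_max_right a b)] at h1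
      exact_mod_cast h1

lemma mid_seg {k : ℕ} {Λ : KGraphData k} (hΛ : IsKGraph Λ) (x : BPath k Λ)
    (a b q q' : Fin k → ℕ) (hq : q ≤ q')
    (ha : leDeg k (a + q') x.deg) (hb : leDeg k (b + q') x.deg)
    (h1 : x.seg a (a + q) = x.seg b (b + q))
    (h2 : x.seg a (a + q') = x.seg b (b + q')) :
    x.seg (a + q) (a + q') = x.seg (b + q) (b + q') := by
  have haq : a + q ≤ a + q' := add_le_add_right hq a
  have hbq : b + q ≤ b + q' := add_le_add_right hq b
  have ha1 : a ≤ a + q := le_self_add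
  have hb1 : b ≤ b + q := le_self_add
  have haq' : leDeg k (a + q) x.deg := fun i =>
    le_trans (by exact_mod_cast haq i) (ha i)
  have hbq' : leDeg k (b + q) x.deg := fun i =>
    le_trans (by exact_mod_cast hbq i) (hb i)
  obtain ⟨P, -, hP⟩ := hΛ.factor (x.seg a (a + q')) q (q' - q)
    (by rw [x.seg_deg a (a + q') le_self_add ha]; funext i
        have hqi : q i ≤ q' i := hq i
        simp only [Pi.sub_apply, Pi.add_apply]
        omega)
  have hA := hP (x.seg a (a + q), x.seg (a + q) (a + q')) ⟨by
      rw [x.seg_s a (a + q) ha1 haq', x.seg_r (a + q) (a + q') haq ha], by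
      rw [x.seg_deg a (a + q) ha1 haq']; funext i
      simp only [Pi.sub_apply, Pi.add_apply]; omega, by
      rw [x.seg_deg (a + q) (a + q') haq ha]; funext i
      simp only [Pi.sub_apply, Pi.add_apply]; omega,
      x.seg_comp a (a + q) (a + q') ha1 haq ha⟩
  have hB := hP (x.seg b (b + q), x.seg (b + q) (b + q')) ⟨by
      rw [x.seg_s b (b + q) hb1 hbq', x.seg_r (b + q) (b + q') hbq hb], by
      rw [x.seg_deg b (b + q) hb1 hbq']; funext i
      simp only [Pi.sub_apply, Pi.add_apply]; omega, by
      rw [x.seg_deg (b + q) (b + q') hbq hb]; funext i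
      simp only [Pi.sub_apply, Pi.add_apply]; omega, by
      rw [x.seg_comp b (b + q) (b + q') hb1 hbq hb]; exact h2.symm⟩
  exact congrArg Prod.snd (hA.trans hB.symm)
/-- Fix `v ∈ Λ⁰`, `m ≠ n` and `p` with `p ∧ d(x₀) = 0` for some
`x₀ ∈ vΛ^{≤∞}`. Then the desourcification has local periodicity `m, n` at the
vertex `[x₀;p]` (expressed by (i)) if and only if `Λ` has local periodicity
`m, n` at `v`. -/
theorem local_periodicity_projection (k : ℕ) (hk : 1 ≤ k) (Λ : KGraphData k)
    (hΛ : IsKGraph Λ) (hrf : RowFinite Λ) (hlc : LocallyConvex Λ)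
    (v : Λ.Obj) (m n p : Fin k → ℕ) (hmn : m ≠ n)
    (x0 : BPath k Λ) (hx0 : x0.vert 0 = v) (hp : wedge p x0.deg = 0) :
    (∀ z : BPath k Λ, z.vert 0 = v →
        ∀ l : Fin k → ℕ, PRel (z, p + m, p + m + l) (z, p + n, p + n + l)) ↔
      LocalPeriodicity Λ m n v := by
  -- For each coordinate, either p i = 0 or every boundary path at v has degree 0 there.
  have hpz : ∀ z : BPath k Λ, z.vert 0 = v → ∀ i, p i = 0 ∨ z.deg i = 0 := by
    intro z hz i
    by_cases hpi : p i = 0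
    · exact Or.inl hpi
    right
    have hx0i : x0.deg i = 0 := by
      have h := congrFun hp i
      rw [Pi.zero_apply] at h
      have hc := wedge_coe p x0.deg i
      rw [h] at hc
      by_contra hne
      have h1 : (1 : ℕ∞) ≤ (p i : ℕ∞) := by
        exact_mod_cast Nat.one_le_iff_ne_zero.mpr hpi
      have h2 : (1 : ℕ∞) ≤ x0.deg i := ENat.one_le_iff_ne_zero.mpr hne
      have h3 := le_inf h1 h2
      rw [← hc] at h3
      simp at h3
    by_contra hzi
    have h1 : (1 : ℕ∞) ≤ z.deg i := ENat.one_le_iff_ne_zero.mpr hzi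
    have hsing : leDeg k (Pi.single i 1) z.deg := by
      intro j
      by_cases hj : j = i
      · subst hj; simpa using h1
      · simp [Pi.single_apply, hj]
    have hr : Λ.r (z.seg 0 (Pi.single i 1)) = x0.vert 0 := by
      rw [z.seg_r 0 (Pi.single i 1) zero_le hsing, hz, ← hx0]
    have hd : Λ.d (z.seg 0 (Pi.single i 1)) = Pi.single i 1 := by
      rw [z.seg_deg 0 (Pi.single i 1) zero_le hsing]; simp
    exact x0.boundary 0 i (fun j => by simp) (by simp [hx0i]) _ hr hd
  have hwp : ∀ z : BPath k Λ, z.vert 0 = v → ∀ q : Fin k → ℕ,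
      wedge (p + q) z.deg = wedge q z.deg := by
    intro z hz q
    funext i
    rcases hpz z hz i with h | h
    · simp [wedge, Pi.add_apply, h]
    · simp [wedge, h, inf_eq_right]
  constructor
  · -- (i) → (ii)
    intro H x hx
    have hkey : ∀ l, x.seg (wedge m x.deg) (wedge (m + l) x.deg)
        = x.seg (wedge n x.deg) (wedge (n + l) x.deg) := by
      intro l
      have h := (H x hx l).1
      rw [hwp x hx m, hwp x hx n, add_assoc p m l, add_assoc p n l,
        hwp x hx (m + l), hwp x hx (n + l)] at h
      exact h
    have hsub : m - wedge m x.deg = n - wedge n x.deg := by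
      have h2 := (H x hx 0).2.1
      rw [hwp x hx m, hwp x hx n] at h2
      funext i
      have h3 := congrFun h2 i
      have ham : wedge m x.deg i ≤ m i := wedge_le m x.deg i
      have hbn : wedge n x.deg i ≤ n i := wedge_le n x.deg i
      simp only [Pi.sub_apply, Pi.add_apply] at h3 ⊢
      omega
    have hwl : ∀ l, wedge l (fun i => x.deg i - (wedge m x.deg i : ℕ∞))
        = wedge l (fun i => x.deg i - (wedge n x.deg i : ℕ∞)) := by
      intro l
      have h := hkey l
      rw [wedge_add m l x.deg, wedge_add n l x.deg] at h
      have hda := x.seg_deg (wedge m x.deg)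
        (wedge m x.deg + wedge l (fun i => x.deg i - (wedge m x.deg i : ℕ∞)))
        le_self_add (by rw [← wedge_add]; exact wedge_leDeg _ _)
      have hdb := x.seg_deg (wedge n x.deg)
        (wedge n x.deg + wedge l (fun i => x.deg i - (wedge n x.deg i : ℕ∞)))
        le_self_add (by rw [← wedge_add]; exact wedge_leDeg _ _)
      have hd := congrArg Λ.d h
      rw [hda, hdb] at hd
      funext i
      have h4 := congrFun hd i
      simp only [Pi.sub_apply, Pi.add_apply] at h4
      omega
    have hdeg : (fun i => x.deg i - (wedge m x.deg i : ℕ∞))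
        = (fun i => x.deg i - (wedge n x.deg i : ℕ∞)) := by
      funext i
      apply enat_eq_of_inf
      intro N
      have h := congrFun (hwl (fun _ => N)) i
      have h1 := wedge_coe (fun _ => N) (fun i => x.deg i - (wedge m x.deg i : ℕ∞)) i
      have h2 := wedge_coe (fun _ => N) (fun i => x.deg i - (wedge n x.deg i : ℕ∞)) i
      rw [← h1, ← h2]
      exact_mod_cast h
    refine ⟨hsub, hdeg, ?_⟩
    intro q q' hqq hq'
    have hq'' : leDeg k q' (fun i => x.deg i - (wedge m x.deg i : ℕ∞)) := hq'
    have hqa : leDeg k q (fun i => x.deg i - (wedge m x.deg i : ℕ∞)) := fun i =>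
      le_trans (by exact_mod_cast hqq i) (hq'' i)
    have hA' := hkey q'
    rw [wedge_add m q' x.deg, wedge_add n q' x.deg, ← hdeg,
      wedge_eq_of_leDeg hq''] at hA'
    have hA := hkey q
    rw [wedge_add m q x.deg, wedge_add n q x.deg, ← hdeg,
      wedge_eq_of_leDeg hqa] at hA
    have hle : ∀ c : Fin k → ℕ, leDeg k q' (fun i => x.deg i - (c i : ℕ∞)) →
        leDeg k c x.deg → leDeg k (c + q') x.deg := by
      intro c h1 h2 i
      have h3 := add_le_add_right (h1 i) (c i : ℕ∞)
      rw [add_tsub_cancel_of_le (h2 i)] at h3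
      calc ((c + q') i : ℕ∞) = (c i : ℕ∞) + (q' i : ℕ∞) := by push_cast; rfl
        _ ≤ x.deg i := h3
    have hbq' : leDeg k q' (fun i => x.deg i - (wedge n x.deg i : ℕ∞)) := by
      rw [← hdeg]; exact hq''
    have hmid := mid_seg hΛ x (wedge m x.deg) (wedge n x.deg) q q' hqq
      (hle _ hq'' (wedge_leDeg m x.deg)) (hle _ hbq' (wedge_leDeg n x.deg)) hA hA'
    show x.seg (q + wedge m x.deg) (q' + wedge m x.deg)
        = x.seg (q + wedge n x.deg) (q' + wedge n x.deg)
    rw [add_comm q (wedge m x.deg), add_comm q' (wedge m x.deg),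
      add_comm q (wedge n x.deg), add_comm q' (wedge n x.deg)]
    exact hmid
  · -- (ii) → (i)
    intro H z hz l
    obtain ⟨hsub, hdeg, hseg⟩ := H z hz
    have hdeg' : (fun i => z.deg i - (wedge m z.deg i : ℕ∞))
        = (fun i => z.deg i - (wedge n z.deg i : ℕ∞)) := hdeg
    refine ⟨?_, ?_, ?_⟩
    · show z.seg (wedge (p + m) z.deg) (wedge (p + m + l) z.deg)
        = z.seg (wedge (p + n) z.deg) (wedge (p + n + l) z.deg)
      rw [hwp z hz m, hwp z hz n, add_assoc p m l, add_assoc p n l,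
        hwp z hz (m + l), hwp z hz (n + l), wedge_add m l z.deg, wedge_add n l z.deg,
        ← hdeg']
      have h0 := hseg 0 (wedge l (fun i => z.deg i - (wedge m z.deg i : ℕ∞)))
        zero_le (wedge_leDeg _ _)
      have h0' : z.seg (0 + wedge m z.deg)
          (wedge l (fun i => z.deg i - (wedge m z.deg i : ℕ∞)) + wedge m z.deg)
          = z.seg (0 + wedge n z.deg)
          (wedge l (fun i => z.deg i - (wedge m z.deg i : ℕ∞)) + wedge n z.deg) := h0
      rw [zero_add, zero_add] at h0'
      rw [add_comm (wedge m z.deg) (wedge l _), add_comm (wedge n z.deg) (wedge l _)]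
      exact h0'
    · show p + m - wedge (p + m) z.deg = p + n - wedge (p + n) z.deg
      rw [hwp z hz m, hwp z hz n]
      funext i
      have h3 := congrFun hsub i
      have ham : wedge m z.deg i ≤ m i := wedge_le m z.deg i
      have hbn : wedge n z.deg i ≤ n i := wedge_le n z.deg i
      simp only [Pi.sub_apply, Pi.add_apply] at h3 ⊢
      omega
    · funext i
      simp only [Pi.sub_apply, Pi.add_apply]
      omega
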